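/- Let 0 < a < 1/2 and a < b < 1-a, and define lambda_pm = (sqrt(b(1-a)) +/ - sqrt(a(1-b)))^2. Then 0 <= lambda_- <= lambda_+ <= 1, and moreover for sigma in [-a,0], setting x = sqrt((b+sigma)(1-a+sigma))/(1+2 sigma) and y = sqrt((1-b+sigma)(a+sigma))/(1+2 sigma), one has x^2 + y^2 < 1. -/

import Mathlib

/-- With `0 < a < 1/2` and `a < b < 1-a`, setting
`λ± = (√(b(1-a)) ± √(a(1-b)))²`, we have `0 ≤ λ₋ ≤ λ₊ ≤ 1`; and for `σ ∈ [-a,0]`,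
setting `x = √((b+σ)(1-a+σ))/(1+2σ)` and `y = √((1-b+σ)(a+σ))/(1+2σ)`,
we have `x² + y² < 1`. -/
theorem jacobi_support_bounds (a b : ℝ) (ha : 0 < a) (ha' : a < 1 / 2)
    (hab : a < b) (hab' : b < 1 - a) :
    (0 ≤ (Real.sqrt (b * (1 - a)) - Real.sqrt (a * (1 - b))) ^ 2 ∧
     (Real.sqrt (b * (1 - a)) - Real.sqrt (a * (1 - b))) ^ 2
        ≤ (Real.sqrt (b * (1 - a)) + Real.sqrt (a * (1 - b))) ^ 2 ∧
     (Real.sqrt (b * (1 - a)) + Real.sqrt (a * (1 - b))) ^ 2 ≤ 1) ∧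
    ∀ σ : ℝ, -a ≤ σ → σ ≤ 0 →
      (Real.sqrt ((b + σ) * (1 - a + σ)) / (1 + 2 * σ)) ^ 2 +
        (Real.sqrt ((1 - b + σ) * (a + σ)) / (1 + 2 * σ)) ^ 2 < 1 := by
  have hb0 : 0 < b := ha.trans hab
  have h1b : 0 < 1 - b := by linarith
  have h1a : 0 < 1 - a := by linarith
  set s := Real.sqrt (b * (1 - a)) with hs
  set t := Real.sqrt (a * (1 - b)) with ht
  have hs0 : 0 ≤ s := Real.sqrt_nonneg _
  have ht0 : 0 ≤ t := Real.sqrt_nonneg _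
  have hs2 : s ^ 2 = b * (1 - a) := Real.sq_sqrt (by positivity)
  have ht2 : t ^ 2 = a * (1 - b) := Real.sq_sqrt (by positivity)
  constructor
  · refine ⟨sq_nonneg _, ?_, ?_⟩
    · nlinarith [mul_nonneg hs0 ht0]
    · have hst : (s * t) ^ 2 = (a * b) * ((1 - a) * (1 - b)) := by
        rw [mul_pow, hs2, ht2]; ring
      have hX : 0 < a * b + (1 - a) * (1 - b) := by positivity
      have key : (a * b + (1 - a) * (1 - b)) ^ 2 - (2 * (s * t)) ^ 2 ≥ 0 := by
        nlinarith [hst, sq_nonneg (a * b - (1 - a) * (1 - b))]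
      have h2st : 2 * (s * t) ≤ a * b + (1 - a) * (1 - b) := by
        nlinarith [mul_nonneg hs0 ht0, key, hX]
      nlinarith [h2st, hs2, ht2]
  · intro σ hσ1 hσ2
    have hd : 0 < 1 + 2 * σ := by linarith
    have hA : 0 ≤ (b + σ) * (1 - a + σ) := by nlinarith
    have hB : 0 ≤ (1 - b + σ) * (a + σ) := by nlinarith
    rw [div_pow, div_pow, Real.sq_sqrt hA, Real.sq_sqrt hB, ← add_div,
      div_lt_one (by positivity)]
    nlinarith [mul_pos (by linarith : (0:ℝ) < 1 - 2 * a) (by linarith : (0:ℝ) < 1 - a - b),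
      mul_nonneg (by linarith : (0:ℝ) ≤ σ + a) (by linarith : (0:ℝ) ≤ 1 - a + σ)]
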